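/- Let R be a ring, let n ≥ 0, and let M_0, M_1, …, M_{n+1} and N_0, N_1, …, N_n be R-modules with M_{n+1} = 0. Suppose given R-linear maps s_i : M_{i+1} → M_i and θ_i : N_i → M_i for 0 ≤ i ≤ n such that for each i the map M_{i+1} ⊕ N_i → M_i, (m, x) ↦ s_i(m) + θ_i(x), is an isomorphism. Then the R-linear map ⨁_{i=0}^{n} N_i → M_0 whose i-th component is the composite θ'_i = s_0 ∘ s_1 ∘ ⋯ ∘ s_{i−1} ∘ θ_i (with θ'_0 = θ_0) is an isomorphism. -/

import Mathlib

/-- The composite `s_0 ∘ s_1 ∘ ⋯ ∘ s_(i-1) : M_i →ₗ[R] M_0`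
(equal to the identity when `i = 0`). -/
def compS {R : Type*} [Ring R] (M : ℕ → Type*)
    [∀ i, AddCommGroup (M i)] [∀ i, Module R (M i)]
    (s : ∀ i, M (i + 1) →ₗ[R] M i) : ∀ i, M i →ₗ[R] M 0
  | 0 => LinearMap.id
  | (i + 1) => (compS M s i).comp (s i)

lemma compS_succ {R : Type*} [Ring R] (M : ℕ → Type*)
    [∀ i, AddCommGroup (M i)] [∀ i, Module R (M i)]
    (s : ∀ i, M (i + 1) →ₗ[R] M i) :
    ∀ i, compS M s (i + 1) =
      (s 0).comp (compS (fun j => M (j + 1)) (fun j => s (j + 1)) i)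
  | 0 => by ext x; rfl
  | (i + 1) => by
    show (compS M s (i + 1)).comp (s (i + 1)) = _
    rw [compS_succ M s i]
    rfl

theorem stmt_1 {R : Type*} [Ring R] (n : ℕ)
    (M : ℕ → Type*) [∀ i, AddCommGroup (M i)] [∀ i, Module R (M i)]
    (N : ℕ → Type*) [∀ i, AddCommGroup (N i)] [∀ i, Module R (N i)]
    (hM : Subsingleton (M (n + 1)))
    (s : ∀ i, M (i + 1) →ₗ[R] M i)
    (θ : ∀ i, N i →ₗ[R] M i)
    (hsplit : ∀ i, i ≤ n → Function.Bijective ((s i).coprod (θ i))) :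
    Function.Bijective
      (LinearMap.lsum R (fun i : Fin (n + 1) => N i.1) ℕ
        (fun i : Fin (n + 1) => (compS M s i.1).comp (θ i.1))) := by
  induction n generalizing M N s θ with
  | zero =>
    have hθ : Function.Bijective (θ 0) := by
      constructor
      · intro a b h
        have h2 := (hsplit 0 le_rfl).1
          (a₁ := (0, a)) (a₂ := (0, b)) (by simp [h])
        simpa using congrArg Prod.snd h2
      · intro m
        obtain ⟨⟨a, b⟩, hab⟩ := (hsplit 0 le_rfl).2 m
        refine ⟨b, ?_⟩
        have ha : a = 0 := Subsingleton.elim a 0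
        subst ha
        simpa using hab
    have hE : Function.Bijective (fun (x : ∀ i : Fin 1, N i.1) => x 0) := by
      refine Equiv.bijective ⟨fun x => x 0, fun a => Fin.cons a finZeroElim,
        fun x => ?_, fun a => by simp⟩
      funext i
      have : i = 0 := Fin.ext (by omega)
      subst this
      simp
    have : ⇑(LinearMap.lsum R (fun i : Fin 1 => N i.1) ℕ
        (fun i : Fin 1 => (compS M s i.1).comp (θ i.1)))
        = (θ 0) ∘ (fun x => x 0) := by
      funext x
      simp only [LinearMap.lsum_apply, Fin.sum_univ_one, LinearMap.comp_apply,
        Function.comp_apply]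
      rfl
    rw [this]
    exact hθ.comp hE
  | succ n ih =>
    have hG := ih (fun j => M (j + 1)) (fun j => N (j + 1)) hM
      (fun j => s (j + 1)) (fun j => θ (j + 1))
      (fun i hi => hsplit (i + 1) (by omega))
    have hE : Function.Bijective
        (fun (x : ∀ i : Fin (n + 2), N i.1) => (Fin.tail x, x 0)) := by
      refine Equiv.bijective ⟨fun x => (Fin.tail x, x 0),
        fun p => Fin.cons p.2 p.1, fun x => ?_, fun p => by simp; rfl⟩
      simp [Fin.cons_self_tail]
    have key : ⇑(LinearMap.lsum R (fun i : Fin (n + 2) => N i.1) ℕ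
        (fun i : Fin (n + 2) => (compS M s i.1).comp (θ i.1)))
        = ((s 0).coprod (θ 0)) ∘
          (Prod.map ⇑(LinearMap.lsum R (fun i : Fin (n + 1) => N (i.1 + 1)) ℕ
            (fun i : Fin (n + 1) =>
              (compS (fun j => M (j + 1)) (fun j => s (j + 1)) i.1).comp
                (θ (i.1 + 1)))) id) ∘
          (fun x => (Fin.tail x, x 0)) := by
      funext x
      simp only [LinearMap.lsum_apply, LinearMap.sum_apply, LinearMap.comp_apply,
        LinearMap.proj_apply, Function.comp_apply, Prod.map_apply, id_eq,
        LinearMap.coprod_apply]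
      simp only [Prod.map_fst, Prod.map_snd, id_eq, LinearMap.sum_apply, LinearMap.comp_apply,
        LinearMap.proj_apply]
      rw [Fin.sum_univ_succ, map_sum, add_comm]
      congr 1
      · refine Finset.sum_congr (M := M 0) rfl fun j _ => ?_
        have h : compS M s (j.1 + 1) =
            (s 0).comp (compS (fun k => M (k + 1)) (fun k => s (k + 1)) j.1) :=
          compS_succ M s j.1
        exact DFunLike.congr_fun h ((θ (j.1 + 1)) (x j.succ))
    rw [key]
    exact (hsplit 0 (by omega)).comp ((hG.prodMap Function.bijective_id).comp hE)
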